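/- Consider an instance of the MST problem under explorable uncertainty with unique T_L = T_U. Let l_i ∈ C_i ∖ {f_i} with I_{l_i} ∩ I_{f_i} ≠ ∅ be such that l_i ∉ C_j for all j < i. Then {l_i, f_i} is a witness set; furthermore, if the true value w_{l_i} lies in I_{f_i}, then {f_i} is a witness set (i.e., f_i is mandatory). -/

import Mathlib

/-!
Common framework: the minimum spanning tree problem under explorable
uncertainty with (untrusted) predictions.
-/

open scoped BigOperators
open scoped Classical

noncomputable section

/-- An instance of the MST problem under explorable uncertainty with predictions:
a connected (multi)graph whose edges carry uncertainty intervals (open `(L,U)` for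
non-trivial edges, i.e. `L < U`, and the singleton `{L}` for trivial edges, i.e. `L = U`)
together with predicted values `pw e` lying in the intervals. -/
structure UncGraph where
  V : Type
  E : Type
  fintV : Fintype V
  fintE : Fintype E
  decV : DecidableEq V
  decE : DecidableEq E
  ends : E → Sym2 V
  conn : ∀ u v : V, Relation.ReflTransGen (fun a b => ∃ e : E, ends e = s(a, b)) u v
  L : E → ℝ
  U : E → ℝ
  LU : ∀ e, L e ≤ U e
  pw : E → ℝ
  pw_mem : ∀ e, (L e = U e ∧ pw e = L e) ∨ (L e < pw e ∧ pw e < U e)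

attribute [instance] UncGraph.fintV UncGraph.fintE UncGraph.decV UncGraph.decE

namespace UncGraph

variable (G : UncGraph)

/-- The uncertainty interval of an edge: the open interval `(L e, U e)` for a
non-trivial edge, the singleton `{L e}` for a trivial edge (`L e = U e`). -/
def I (e : G.E) : Set ℝ :=
  {x | (G.L e = G.U e ∧ x = G.L e) ∨ (G.L e < x ∧ x < G.U e)}

/-- A trivial edge: its interval is a singleton. -/
def TrivialEdge (e : G.E) : Prop := G.L e = G.U e

/-- A non-trivial edge: its interval is a nonempty open interval. -/
def NontrivialEdge (e : G.E) : Prop := G.L e < G.U e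

/-- `w` is a valid realization of true edge weights. -/
def Valid (w : G.E → ℝ) : Prop := ∀ e, w e ∈ G.I e

/-- Connectivity of two vertices using only edges from `S`. -/
def ConnectsVia (S : Finset G.E) (u v : G.V) : Prop :=
  Relation.ReflTransGen (fun a b => ∃ e ∈ S, G.ends e = s(a, b)) u v

/-- `S` is a spanning tree: it connects all vertices and has `|V| - 1` edges. -/
def IsSpanningTree (S : Finset G.E) : Prop :=
  (∀ u v : G.V, G.ConnectsVia S u v) ∧ S.card + 1 = Fintype.card G.V

/-- `T` is a minimum spanning tree with respect to the weight function `wf`. -/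
def IsMST (wf : G.E → ℝ) (T : Finset G.E) : Prop :=
  G.IsSpanningTree T ∧ ∀ T', G.IsSpanningTree T' → ∑ e ∈ T, wf e ≤ ∑ e ∈ T', wf e

/-- `wf` agrees with the true values `w` on the queried set `Q` and lies in the
uncertainty intervals elsewhere. -/
def Compatible (w : G.E → ℝ) (Q : Finset G.E) (wf : G.E → ℝ) : Prop :=
  (∀ e ∈ Q, wf e = w e) ∧ ∀ e, wf e ∈ G.I e

/-- The query set `Q` verifies `T`: `T` is an MST for every weight function
compatible with the revealed values. -/
def Verifies (w : G.E → ℝ) (Q T : Finset G.E) : Prop :=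
  ∀ wf, G.Compatible w Q wf → G.IsMST wf T

/-- `Q` is a feasible query set for true values `w`. -/
def Feasible (w : G.E → ℝ) (Q : Finset G.E) : Prop :=
  ∃ T, G.Verifies w Q T

/-- The minimum cardinality of a feasible query set. -/
def optCost (w : G.E → ℝ) : ℕ :=
  sInf {n | ∃ Q, G.Feasible w Q ∧ Q.card = n}

/-- `Q` is an optimal (minimum-cardinality feasible) query set. -/
def IsOptimal (w : G.E → ℝ) (Q : Finset G.E) : Prop :=
  G.Feasible w Q ∧ ∀ Q', G.Feasible w Q' → Q.card ≤ Q'.card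

/-- An edge is mandatory if it belongs to every feasible query set. -/
def Mandatory (w : G.E → ℝ) (e : G.E) : Prop :=
  ∀ Q, G.Feasible w Q → e ∈ Q

/-- A witness set intersects every feasible query set. -/
def IsWitnessSet (w : G.E → ℝ) (W : Finset G.E) : Prop :=
  ∀ Q, G.Feasible w Q → ∃ e ∈ W, e ∈ Q

/-- An edge is prediction mandatory if it is mandatory under the assumption that
all queries return the predicted values. -/
def PredMandatory (e : G.E) : Prop := G.Mandatory G.pw e

/-- An instance is prediction mandatory free if it has no prediction mandatory edge. -/
def PredMandatoryFree : Prop := ∀ e, ¬ G.PredMandatory e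

/-- Hop-distance indicator `k_{e'}(e)`: `0` if the prediction `p e` has the same
relation to the interval `I e'` as the true value `w e` (both `≤ L e'`, both
`≥ U e'`, or both strictly inside), and `1` otherwise. -/
def kErr (p w : G.E → ℝ) (e e' : G.E) : ℕ :=
  if (p e ≤ G.L e' ∧ w e ≤ G.L e') ∨ (G.U e' ≤ p e ∧ G.U e' ≤ w e) ∨
      (G.L e' < p e ∧ p e < G.U e' ∧ G.L e' < w e ∧ w e < G.U e')
  then 0 else 1

/-- `h→(e) = Σ_{e' ≠ e} k_{e'}(e)`. -/
def hright (p w : G.E → ℝ) (e : G.E) : ℕ :=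
  ∑ e' ∈ Finset.univ.erase e, G.kErr p w e e'

/-- `h←(e) = Σ_{e' ≠ e} k_e(e')`. -/
def hleft (p w : G.E → ℝ) (e : G.E) : ℕ :=
  ∑ e' ∈ Finset.univ.erase e, G.kErr p w e' e

/-- `h→(E') = Σ_{e ∈ E'} h→(e)`. -/
def hrightSum (p w : G.E → ℝ) (S : Finset G.E) : ℕ := ∑ e ∈ S, G.hright p w e

/-- `h←(E') = Σ_{e ∈ E'} h←(e)`. -/
def hleftSum (p w : G.E → ℝ) (S : Finset G.E) : ℕ := ∑ e ∈ S, G.hleft p w e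

/-- The hop distance of prediction `p` for realization `w`. -/
def hopDist (p w : G.E → ℝ) : ℕ := ∑ e, G.hright p w e

/-- The hop distance `k_h` of the instance's predictions for realization `w`. -/
def khop (w : G.E → ℝ) : ℕ := G.hopDist G.pw w

/-- Lower-limit weights `w^L`: `L e + ε` for non-trivial edges, the known value
for trivial edges. -/
def lowerWeight (ε : ℝ) (e : G.E) : ℝ := if G.L e = G.U e then G.L e else G.L e + ε

/-- Upper-limit weights `w^U`: `U e - ε` for non-trivial edges, the known value
for trivial edges. -/
def upperWeight (ε : ℝ) (e : G.E) : ℝ := if G.L e = G.U e then G.L e else G.U e - ε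

/-- `T` is a lower limit tree: an MST for `w^L` for all sufficiently small `ε > 0`. -/
def IsLowerLimitTree (T : Finset G.E) : Prop :=
  ∃ ε₀ > (0 : ℝ), ∀ ε : ℝ, 0 < ε → ε < ε₀ → G.IsMST (G.lowerWeight ε) T

/-- `T` is an upper limit tree: an MST for `w^U` for all sufficiently small `ε > 0`. -/
def IsUpperLimitTree (T : Finset G.E) : Prop :=
  ∃ ε₀ > (0 : ℝ), ∀ ε : ℝ, 0 < ε → ε < ε₀ → G.IsMST (G.upperWeight ε) T

/-- `T` is simultaneously the unique lower limit tree and the unique upper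
limit tree (`T_L = T_U`, both unique). -/
def UniqueLimitTrees (T : Finset G.E) : Prop :=
  G.IsLowerLimitTree T ∧ G.IsUpperLimitTree T ∧
  (∀ T', G.IsLowerLimitTree T' → T' = T) ∧
  (∀ T', G.IsUpperLimitTree T' → T' = T)

/-- Number of edge-ends of `S` incident to `v` (loops count twice). -/
def incCount (S : Finset G.E) (v : G.V) : ℕ :=
  ∑ e ∈ S, (if G.ends e = s(v, v) then 2 else if v ∈ G.ends e then 1 else 0)

/-- `S` forms a single cycle: nonempty, every vertex has degree `0` or `2`,
and the support is connected. -/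
def IsCycle (S : Finset G.E) : Prop :=
  S.Nonempty ∧ (∀ v, G.incCount S v = 0 ∨ G.incCount S v = 2) ∧
  ∀ u v, G.incCount S u ≠ 0 → G.incCount S v ≠ 0 → G.ConnectsVia S u v

/-- `C` is the cycle closed by adding the edge `f` to the tree `T`. -/
def IsCycleOf (T : Finset G.E) (f : G.E) (C : Finset G.E) : Prop :=
  G.IsCycle C ∧ f ∈ C ∧ C ⊆ insert f T

/-- `e'` lies in the cut `X_e` between the two components of `T \ {e}`. -/
def InCut (T : Finset G.E) (e e' : G.E) : Prop :=
  ∀ u v : G.V, G.ends e' = s(u, v) → ¬ G.ConnectsVia (T.erase e) u v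

/-- `S` is a path between the (distinct) vertices `a` and `b`. -/
def IsPathBetween (S : Finset G.E) (a b : G.V) : Prop :=
  a ≠ b ∧ G.incCount S a = 1 ∧ G.incCount S b = 1 ∧
  (∀ v, v ≠ a → v ≠ b → G.incCount S v = 0 ∨ G.incCount S v = 2) ∧
  ∀ v, G.incCount S v ≠ 0 → G.ConnectsVia S a v

/-- `{f, l}` is an edge of the vertex cover instance `Ḡ` (w.r.t. the tree `T`):
`f ∉ T`, `l ≠ f` lies on the cycle closed by `f`, both are non-trivial, and
their intervals intersect. -/
def VCEdge (T : Finset G.E) (f l : G.E) : Prop :=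
  f ∉ T ∧ l ≠ f ∧ G.NontrivialEdge f ∧ G.NontrivialEdge l ∧
  (∃ C, G.IsCycleOf T f C ∧ l ∈ C) ∧ (G.I f ∩ G.I l).Nonempty

/-- Adjacency in the vertex cover instance `Ḡ` (symmetrized). -/
def VCAdj (T : Finset G.E) (a b : G.E) : Prop := G.VCEdge T a b ∨ G.VCEdge T b a

/-- `S` is a vertex cover of the vertex cover instance `Ḡ`. -/
def IsVCCover (T S : Finset G.E) : Prop :=
  ∀ a b, G.VCAdj T a b → a ∈ S ∨ b ∈ S

/-- `S` is a minimum vertex cover of the vertex cover instance `Ḡ`. -/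
def IsMinVC (T S : Finset G.E) : Prop :=
  G.IsVCCover T S ∧ ∀ S', G.IsVCCover T S' → S.card ≤ S'.card

/-- Edge `e` does not occur in the instance anymore: independently of the
remaining uncertainty it can be deleted (some MST avoids it, for every
realization) or contracted (some MST contains it, for every realization). -/
def Removable (e : G.E) : Prop :=
  (∀ wf : G.E → ℝ, (∀ e', wf e' ∈ G.I e') → ∃ T, G.IsMST wf T ∧ e ∉ T) ∨
  (∀ wf : G.E → ℝ, (∀ e', wf e' ∈ G.I e') → ∃ T, G.IsMST wf T ∧ e ∈ T)

end UncGraph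

/-- The instance obtained from `G` by querying the edges of `Q` under true
values `w`: the intervals of queried edges collapse to the revealed values. -/
def UncGraph.restrict (G : UncGraph) (w : G.E → ℝ) (Q : Finset G.E) : UncGraph where
  V := G.V
  E := G.E
  fintV := G.fintV
  fintE := G.fintE
  decV := G.decV
  decE := G.decE
  ends := G.ends
  conn := G.conn
  L := fun e => if e ∈ Q then w e else G.L e
  U := fun e => if e ∈ Q then w e else G.U e
  LU := fun e => by by_cases h : e ∈ Q <;> simp [h, G.LU e]
  pw := fun e => if e ∈ Q then w e else G.pw e
  pw_mem := fun e => by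
    by_cases h : e ∈ Q
    · simp [h]
    · simpa [h] using G.pw_mem e

/-- A deterministic adaptive query algorithm: given the instance and the set of
already queried edges together with the revealed values, it either picks the next
edge to query or stops (`none`).  The lawfulness condition states that the
decision may only depend on the revealed values of already queried edges. -/
structure Algorithm where
  next : ∀ G : UncGraph, Finset G.E → (G.E → ℝ) → Option G.E
  lawful : ∀ (G : UncGraph) (Q : Finset G.E) (w w' : G.E → ℝ),
    (∀ e ∈ Q, w e = w' e) → next G Q w = next G Q w'

namespace Algorithm

/-- The set of edges queried by `A` after `n` steps, on instance `G` with true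
values `w`; the algorithm stops as soon as the queried set is feasible. -/
def runQueries (A : Algorithm) (G : UncGraph) (w : G.E → ℝ) : ℕ → Finset G.E
  | 0 => ∅
  | n + 1 =>
    let Q := A.runQueries G w n
    if G.Feasible w Q then Q
    else
      match A.next G Q w with
      | some e => insert e Q
      | none => Q

/-- The final query set of the run of `A`. -/
def finalQueries (A : Algorithm) (G : UncGraph) (w : G.E → ℝ) : Finset G.E :=
  A.runQueries G w (Fintype.card G.E + 1)

/-- The number of queries made by `A` on instance `G` with true values `w`. -/
def algCost (A : Algorithm) (G : UncGraph) (w : G.E → ℝ) : ℕ :=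
  (A.finalQueries G w).card

/-- `A` solves every instance: it always ends with a feasible query set. -/
def Solves (A : Algorithm) : Prop :=
  ∀ (G : UncGraph) (w : G.E → ℝ), G.Valid w → G.Feasible w (A.finalQueries G w)

/-- `A` is `α`-consistent: on instances with correct predictions it makes at
most `α · |OPT|` queries. -/
def Consistent (A : Algorithm) (α : ℝ) : Prop :=
  ∀ G : UncGraph, (A.algCost G G.pw : ℝ) ≤ α * (G.optCost G.pw : ℝ)

/-- `A` is `β`-robust: it makes at most `β · |OPT|` queries on every instance. -/
def Robust (A : Algorithm) (β : ℝ) : Prop :=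
  ∀ (G : UncGraph) (w : G.E → ℝ), G.Valid w → (A.algCost G w : ℝ) ≤ β * (G.optCost w : ℝ)

/-- Run of a preprocessing algorithm: it stops exactly when `next` returns
`none` (rather than when the queried set is feasible). -/
def runPre (A : Algorithm) (G : UncGraph) (w : G.E → ℝ) : ℕ → Finset G.E
  | 0 => ∅
  | n + 1 =>
    let Q := A.runPre G w n
    match A.next G Q w with
    | some e => insert e Q
    | none => Q

/-- The final query set of a preprocessing run of `A`. -/
def preQueries (A : Algorithm) (G : UncGraph) (w : G.E → ℝ) : Finset G.E :=
  A.runPre G w (Fintype.card G.E + 1)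

end Algorithm

namespace UncGraph

variable {G : UncGraph}

/-- Single-edge connection step. -/
lemma conn_single {S : Finset G.E} {e : G.E} {x y : G.V} (he : e ∈ S)
    (hxy : G.ends e = s(x, y)) : G.ConnectsVia S x y :=
  Relation.ReflTransGen.single ⟨e, he, hxy⟩

lemma conn_symm {S : Finset G.E} {x y : G.V} (h : G.ConnectsVia S x y) :
    G.ConnectsVia S y x := by
  induction h with
  | refl => exact Relation.ReflTransGen.refl
  | tail _ hstep ih =>
      obtain ⟨e, he, hxy⟩ := hstep
      exact Relation.ReflTransGen.trans
        (Relation.ReflTransGen.single ⟨e, he, by rw [hxy, Sym2.eq_swap]⟩) ih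

lemma conn_trans {S : Finset G.E} {x y z : G.V} (h : G.ConnectsVia S x y)
    (h' : G.ConnectsVia S y z) : G.ConnectsVia S x z :=
  Relation.ReflTransGen.trans h h'

lemma conn_mono {S S' : Finset G.E} (hss : S ⊆ S') {x y : G.V}
    (h : G.ConnectsVia S x y) : G.ConnectsVia S' x y := by
  induction h with
  | refl => exact Relation.ReflTransGen.refl
  | tail _ hstep ih =>
      obtain ⟨e, he, hxy⟩ := hstep
      exact ih.tail ⟨e, hss he, hxy⟩

/-- Master splitting lemma: a connection in `S` either avoids `e` or passes
through the endpoints of `e`. -/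
lemma conn_split {S : Finset G.E} {e : G.E} {p q x y : G.V}
    (h : G.ConnectsVia S x y) (hpq : G.ends e = s(p, q)) :
    G.ConnectsVia (S.erase e) x y ∨
    (G.ConnectsVia (S.erase e) x p ∧ G.ConnectsVia (S.erase e) q y) ∨
    (G.ConnectsVia (S.erase e) x q ∧ G.ConnectsVia (S.erase e) p y) := by
  induction h with
  | refl => exact Or.inl Relation.ReflTransGen.refl
  | @tail b c _ hstep ih =>
      obtain ⟨d, hd, hbc⟩ := hstep
      by_cases hde : d = e
      · subst hde
        rw [hpq, Sym2.eq_iff] at hbc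
        rcases hbc with ⟨hb, hc⟩ | ⟨hb, hc⟩
        · subst hb; subst hc
          rcases ih with h1 | ⟨h1, h2⟩ | ⟨h1, h2⟩
          · exact Or.inr (Or.inl ⟨h1, Relation.ReflTransGen.refl⟩)
          · exact Or.inr (Or.inl ⟨h1, Relation.ReflTransGen.refl⟩)
          · exact Or.inl h1
        · subst hb; subst hc
          rcases ih with h1 | ⟨h1, h2⟩ | ⟨h1, h2⟩
          · exact Or.inr (Or.inr ⟨h1, Relation.ReflTransGen.refl⟩)
          · exact Or.inl h1
          · exact Or.inr (Or.inr ⟨h1, Relation.ReflTransGen.refl⟩)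
      · have hstep' : G.ConnectsVia (S.erase e) b c :=
          conn_single (Finset.mem_erase.mpr ⟨hde, hd⟩) hbc
        rcases ih with h1 | ⟨h1, h2⟩ | ⟨h1, h2⟩
        · exact Or.inl (h1.trans hstep')
        · exact Or.inr (Or.inl ⟨h1, h2.trans hstep'⟩)
        · exact Or.inr (Or.inr ⟨h1, h2.trans hstep'⟩)

/-- Rewiring: if the endpoints of `e` are connected in `R ⊇ S.erase e`, then any
`S`-connection transfers to `R`. -/
lemma conn_rewire {S R : Finset G.E} {e : G.E} {p q x y : G.V}
    (h : G.ConnectsVia S x y) (hpq : G.ends e = s(p, q))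
    (hsub : S.erase e ⊆ R) (hR : G.ConnectsVia R p q) :
    G.ConnectsVia R x y := by
  induction h with
  | refl => exact Relation.ReflTransGen.refl
  | @tail b c _ hstep ih =>
      obtain ⟨d, hd, hbc⟩ := hstep
      by_cases hde : d = e
      · subst hde
        rw [hpq, Sym2.eq_iff] at hbc
        rcases hbc with ⟨hb, hc⟩ | ⟨hb, hc⟩
        · subst hb; subst hc; exact ih.trans hR
        · subst hb; subst hc; exact ih.trans (conn_symm hR)
      · exact ih.tail ⟨d, hsub (Finset.mem_erase.mpr ⟨hde, hd⟩), hbc⟩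

/-- Removing an inserted edge whose endpoints are connected. -/
lemma conn_insert_collapse {S : Finset G.E} {d : G.E} {a b x y : G.V}
    (h : G.ConnectsVia (insert d S) x y) (hab : G.ends d = s(a, b))
    (hS : G.ConnectsVia S a b) : G.ConnectsVia S x y :=
  conn_rewire h hab (by
    intro z hz
    rcases Finset.mem_erase.mp hz with ⟨hz1, hz2⟩
    rcases Finset.mem_insert.mp hz2 with h | h
    · exact absurd h hz1
    · exact h) hS

end UncGraph

namespace UncGraph

variable {G : UncGraph}

/-- The connectivity setoid of an edge set. -/
def connSetoid (G : UncGraph) (S : Finset G.E) : Setoid G.V :=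
  ⟨G.ConnectsVia S, ⟨fun _ => Relation.ReflTransGen.refl, conn_symm, conn_trans⟩⟩

noncomputable def ncomp (G : UncGraph) (S : Finset G.E) : ℕ :=
  Fintype.card (Quotient (G.connSetoid S))

lemma conn_empty {x y : G.V} (h : G.ConnectsVia (∅ : Finset G.E) x y) : x = y := by
  induction h with
  | refl => rfl
  | tail _ hstep ih => obtain ⟨e, he, _⟩ := hstep; exact absurd he (Finset.notMem_empty e)

lemma ncomp_empty : G.ncomp ∅ = Fintype.card G.V := by
  refine Fintype.card_congr ⟨Quotient.lift id ?_, Quotient.mk _, ?_, ?_⟩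
  · intro a b hab; exact conn_empty hab
  · intro q; induction q using Quotient.inductionOn; rfl
  · intro v; rfl

lemma ncomp_insert_ge {S : Finset G.E} {e : G.E} :
    G.ncomp S ≤ G.ncomp (insert e S) + 1 := by
  by_cases heS : e ∈ S
  · rw [Finset.insert_eq_self.mpr heS]; omega
  obtain ⟨p, q, hpq'⟩ : ∃ p q, G.ends e = s(p, q) :=
    Sym2.inductionOn (G.ends e) (fun x y => ⟨x, y, rfl⟩)
  classical
  let F : Quotient (G.connSetoid S) → Quotient (G.connSetoid (insert e S)) :=
    Quotient.map id (fun a b hab => conn_mono (Finset.subset_insert e S) hab)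
  have key : ∀ a b : G.V, F ⟦a⟧ = F ⟦b⟧ →
      (⟦a⟧ : Quotient (G.connSetoid S)) = ⟦b⟧ ∨
      ((⟦a⟧ : Quotient (G.connSetoid S)) = ⟦p⟧ ∧ (⟦b⟧ : Quotient (G.connSetoid S)) = ⟦q⟧) ∨
      ((⟦a⟧ : Quotient (G.connSetoid S)) = ⟦q⟧ ∧ (⟦b⟧ : Quotient (G.connSetoid S)) = ⟦p⟧) := by
    intro a b hab
    have h1 : G.ConnectsVia (insert e S) a b := Quotient.exact hab
    have h2 := conn_split (e := e) h1 hpq'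
    rw [Finset.erase_insert heS] at h2
    rcases h2 with h | ⟨h1', h2'⟩ | ⟨h1', h2'⟩
    · exact Or.inl (Quotient.sound h)
    · exact Or.inr (Or.inl ⟨Quotient.sound h1', Quotient.sound (conn_symm h2')⟩)
    · exact Or.inr (Or.inr ⟨Quotient.sound h1', Quotient.sound (conn_symm h2')⟩)
  have hinj : Set.InjOn F {x | x ≠ ⟦p⟧} := by
    intro x hx y hy hxy
    induction x using Quotient.inductionOn with | _ a =>
    induction y using Quotient.inductionOn with | _ b =>
    rcases key a b hxy with h | ⟨h1, h2⟩ | ⟨h1, h2⟩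
    · exact h
    · exact absurd h1 hx
    · rcases key b a hxy.symm with h | ⟨h1', h2'⟩ | ⟨h1', h2'⟩
      · exact h.symm
      · exact absurd h1' hy
      · exact absurd h2 hy
  have hle := Finset.card_le_card_of_injOn F
    (fun x _ => Finset.mem_univ (F x))
    (fun x hx y hy hxy => hinj (by simpa using (Finset.mem_erase.mp hx).1)
      (by simpa using (Finset.mem_erase.mp hy).1) hxy)
    (s := Finset.univ.erase ⟦p⟧) (t := Finset.univ)
  have h1 : (Finset.univ.erase (⟦p⟧ : Quotient (G.connSetoid S))).card =
      G.ncomp S - 1 := by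
    rw [Finset.card_erase_of_mem (Finset.mem_univ _)]; rfl
  have h2 : (Finset.univ : Finset (Quotient (G.connSetoid (insert e S)))).card =
      G.ncomp (insert e S) := Finset.card_univ
  have h3 : 1 ≤ G.ncomp S := Fintype.card_pos_iff.mpr ⟨⟦p⟧⟩
  omega

lemma ncomp_ge (S : Finset G.E) : Fintype.card G.V ≤ G.ncomp S + S.card := by
  induction S using Finset.induction with
  | empty => rw [ncomp_empty]; omega
  | @insert e S heS ih =>
      have := ncomp_insert_ge (G := G) (S := S) (e := e)
      rw [Finset.card_insert_of_notMem heS]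
      omega

lemma card_le_of_conn {S : Finset G.E} (h : ∀ u v : G.V, G.ConnectsVia S u v) :
    Fintype.card G.V ≤ S.card + 1 := by
  rcases isEmpty_or_nonempty G.V with hV | hV
  · simp [Fintype.card_eq_zero]
  have h1 : G.ncomp S = 1 := by
    rw [ncomp, Fintype.card_eq_one_iff]
    obtain ⟨v⟩ := hV
    refine ⟨⟦v⟧, fun x => ?_⟩
    induction x using Quotient.inductionOn with | _ a =>
    exact Quotient.sound (h a v)
  have := ncomp_ge (G := G) S
  omega

/-- Every edge of a spanning tree separates its endpoints. -/
lemma tree_bridge {S : Finset G.E} (hS : G.IsSpanningTree S) {e : G.E} (he : e ∈ S)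
    {p q : G.V} (hpq : G.ends e = s(p, q)) : ¬ G.ConnectsVia (S.erase e) p q := by
  intro hconn
  have hall : ∀ u v : G.V, G.ConnectsVia (S.erase e) u v := by
    intro u v
    exact conn_rewire (hS.1 u v) hpq (Finset.Subset.refl _) hconn
  have hcard := card_le_of_conn hall
  have : (S.erase e).card = S.card - 1 := Finset.card_erase_of_mem he
  have hS2 := hS.2
  have : 1 ≤ S.card := Finset.card_pos.mpr ⟨e, he⟩
  omega
end UncGraph

namespace UncGraph

variable {G : UncGraph}

/-- Edge-labelled walks. -/
inductive Walk (G : UncGraph) (S : Finset G.E) : G.V → List (G.E × G.V) → G.V → Prop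
  | nil (v : G.V) : Walk G S v [] v
  | cons {u x v : G.V} {e : G.E} {l : List (G.E × G.V)} :
      e ∈ S → G.ends e = s(u, x) → Walk G S x l v → Walk G S u ((e, x) :: l) v

lemma walk_to_conn {S : Finset G.E} {u v : G.V} {l : List (G.E × G.V)}
    (h : G.Walk S u l v) : G.ConnectsVia S u v := by
  induction h with
  | nil => exact Relation.ReflTransGen.refl
  | cons he hends _ ih => exact (conn_single he hends).trans ih

lemma conn_to_walk {S : Finset G.E} {u v : G.V} (h : G.ConnectsVia S u v) :
    ∃ l, G.Walk S u l v := by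
  induction h using Relation.ReflTransGen.head_induction_on with
  | refl => exact ⟨[], Walk.nil v⟩
  | head hstep _ ih =>
      obtain ⟨l, hl⟩ := ih
      obtain ⟨e, he, hbc⟩ := hstep
      exact ⟨(e, _) :: l, Walk.cons he hbc hl⟩

lemma walk_edge_mem {S : Finset G.E} {u v : G.V} {l : List (G.E × G.V)}
    (h : G.Walk S u l v) {p : G.E × G.V} (hp : p ∈ l) : p.1 ∈ S := by
  induction h with
  | nil => exact absurd hp List.not_mem_nil
  | cons he _ _ ih =>
      rcases List.mem_cons.mp hp with h | h
      · subst h; exact he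
      · exact ih h

lemma walk_mem_ends {S : Finset G.E} {u v : G.V} {l : List (G.E × G.V)}
    (h : G.Walk S u l v) {d : G.E} {z : G.V} (hp : (d, z) ∈ l) :
    ∃ y, (y = u ∨ y ∈ l.map Prod.snd) ∧ G.ends d = s(y, z) := by
  induction h with
  | nil => exact absurd hp List.not_mem_nil
  | @cons u' x' v' e' l' he' hends' hwalk ih =>
      rcases List.mem_cons.mp hp with h | h
      · cases h
        exact ⟨u', Or.inl rfl, hends'⟩
      · obtain ⟨y, hy, hends⟩ := ih h
        refine ⟨y, ?_, hends⟩
        rcases hy with rfl | hy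
        · exact Or.inr (by simp)
        · exact Or.inr (by simp [hy])

lemma walk_last_mem {S : Finset G.E} {u v : G.V} {l : List (G.E × G.V)}
    (h : G.Walk S u l v) : v = u ∨ v ∈ l.map Prod.snd := by
  induction h with
  | nil => exact Or.inl rfl
  | cons _ _ _ ih =>
      rcases ih with rfl | hv
      · exact Or.inr (by simp)
      · exact Or.inr (by simp [hv])

lemma walk_mem_snd_shorter {S : Finset G.E} {u v : G.V} {l : List (G.E × G.V)}
    (h : G.Walk S u l v) {x : G.V} (hx : x ∈ l.map Prod.snd) :
    ∃ l', G.Walk S x l' v ∧ l'.length < l.length := by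
  induction h with
  | nil => simp at hx
  | @cons u' x' v' e' l' _ _ hwalk ih =>
      rcases List.mem_map.mp hx with ⟨⟨d, z⟩, hdz, hz⟩
      rcases List.mem_cons.mp hdz with h | h
      · refine ⟨l', ?_, by simp⟩
        have : z = x' := by simpa using congrArg Prod.snd h
        rw [← hz, this]; exact hwalk
      · have : x ∈ l'.map Prod.snd := List.mem_map.mpr ⟨(d, z), h, hz⟩
        obtain ⟨l'', hl'', hlen⟩ := ih this
        exact ⟨l'', hl'', by simp; omega⟩

lemma walk_shorten {S : Finset G.E} {u v : G.V} {l : List (G.E × G.V)}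
    (h : G.Walk S u l v) (hnd : ¬ (u :: l.map Prod.snd).Nodup) :
    ∃ l', G.Walk S u l' v ∧ l'.length < l.length := by
  induction h with
  | nil => simp at hnd
  | @cons u' x' v' e' l' he' hends' hwalk ih =>
      rw [List.nodup_cons] at hnd
      push_neg at hnd
      by_cases hu : u' ∈ ((e', x') :: l').map Prod.snd
      · exact walk_mem_snd_shorter (Walk.cons he' hends' hwalk) hu
      · have hnd' : ¬ (x' :: l'.map Prod.snd).Nodup := by
          intro hcontra
          exact absurd (by simpa using hcontra) (hnd (by simpa using hu))
        obtain ⟨l'', hl'', hlen⟩ := ih hnd'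
        exact ⟨(e', x') :: l'', Walk.cons he' hends' hl'', by simp; omega⟩

lemma exists_simple_walk {S : Finset G.E} {u v : G.V} (h : G.ConnectsVia S u v) :
    ∃ l, G.Walk S u l v ∧ (u :: l.map Prod.snd).Nodup := by
  suffices H : ∀ n (l : List (G.E × G.V)), l.length = n → G.Walk S u l v →
      ∃ l', G.Walk S u l' v ∧ (u :: l'.map Prod.snd).Nodup by
    obtain ⟨l, hl⟩ := conn_to_walk h
    exact H l.length l rfl hl
  intro n
  induction n using Nat.strong_induction_on with
  | _ n ih =>
    intro l hn hl
    by_cases hnd : (u :: l.map Prod.snd).Nodup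
    · exact ⟨l, hl, hnd⟩
    · obtain ⟨l', hl', hlen⟩ := walk_shorten hl hnd
      exact ih l'.length (by omega) l' rfl hl'

lemma walk_erase_of_not_mem {S : Finset G.E} {u v : G.V} {l : List (G.E × G.V)}
    (h : G.Walk S u l v) {d : G.E} (hd : d ∉ l.map Prod.fst) :
    G.Walk (S.erase d) u l v := by
  induction h with
  | nil => exact Walk.nil _
  | @cons u' x' v' e' l' he' hends' hwalk ih =>
      simp only [List.map_cons, List.mem_cons] at hd
      push_neg at hd
      exact Walk.cons (Finset.mem_erase.mpr ⟨fun hh => hd.1 hh.symm, he'⟩) hends'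
        (ih hd.2)

lemma walk_cross {S R : Finset G.E} {u v : G.V} {l : List (G.E × G.V)}
    (h : G.Walk S u l v) (hR : ¬ G.ConnectsVia R u v) :
    ∃ l₁ d z l₂ y, l = l₁ ++ (d, z) :: l₂ ∧ G.Walk S u l₁ y ∧
      G.ends d = s(y, z) ∧ ¬ G.ConnectsVia R y z ∧ G.Walk S z l₂ v := by
  induction h with
  | nil => exact absurd Relation.ReflTransGen.refl hR
  | @cons u' x' v' e' l' he' hends' hwalk ih =>
      by_cases hux : G.ConnectsVia R u' x'
      · have hR' : ¬ G.ConnectsVia R x' v' := fun hc => hR (hux.trans hc)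
        obtain ⟨l₁, d, z, l₂, y, rfl, hw1, hends, hnc, hw2⟩ := ih hR'
        exact ⟨(e', x') :: l₁, d, z, l₂, y, rfl,
          Walk.cons he' hends' hw1, hends, hnc, hw2⟩
      · exact ⟨[], e', x', l', u', rfl, Walk.nil u', hends', hux, hwalk⟩

end UncGraph

namespace UncGraph

variable {G : UncGraph}

/-- Contribution of a single edge to the degree of a vertex. -/
def edgeInc (G : UncGraph) (e : G.E) (v : G.V) : ℕ :=
  if G.ends e = s(v, v) then 2 else if v ∈ G.ends e then 1 else 0

lemma incCount_eq (S : Finset G.E) (v : G.V) :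
    G.incCount S v = ∑ e ∈ S, G.edgeInc e v := rfl

lemma edgeInc_eq_one {e : G.E} {x y : G.V} (hxy : G.ends e = s(x, y)) (hne : x ≠ y) :
    G.edgeInc e x = 1 := by
  unfold edgeInc
  rw [hxy]
  simp [Sym2.eq_iff, Sym2.mem_iff, Ne.symm hne]

lemma edgeInc_eq_zero {e : G.E} {x y z : G.V} (hxy : G.ends e = s(x, y))
    (hzx : z ≠ x) (hzy : z ≠ y) : G.edgeInc e z = 0 := by
  unfold edgeInc
  rw [hxy]
  simp [Sym2.eq_iff, Sym2.mem_iff, hzx, hzy, Ne.symm hzx, Ne.symm hzy]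

lemma edgeInc_pos {e : G.E} {x : G.V} (hx : x ∈ G.ends e) : 1 ≤ G.edgeInc e x := by
  unfold edgeInc
  by_cases h : G.ends e = s(x, x) <;> simp [h, hx]

lemma incCount_pos {S : Finset G.E} {e : G.E} (he : e ∈ S) {x : G.V}
    (hx : x ∈ G.ends e) : G.incCount S x ≠ 0 := by
  have h1 : G.edgeInc e x ≤ ∑ d ∈ S, G.edgeInc d x :=
    Finset.single_le_sum (f := fun d => G.edgeInc d x) (fun d _ => Nat.zero_le _) he
  have := edgeInc_pos hx
  rw [incCount_eq]
  omega

lemma sum_mod_two {α : Type*} (s : Finset α) (f : α → ℕ) (h : ∀ a ∈ s, f a % 2 = 0) :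
    (∑ a ∈ s, f a) % 2 = 0 := by
  induction s using Finset.induction with
  | empty => simp
  | @insert a s ha ih =>
      rw [Finset.sum_insert ha]
      have h1 := h a (Finset.mem_insert_self a s)
      have h2 := ih (fun b hb => h b (Finset.mem_insert_of_mem hb))
      omega

lemma even_sum_edgeInc {e : G.E} (K : Finset G.V)
    (hcl : ∀ x y, G.ends e = s(x, y) → (x ∈ K ↔ y ∈ K)) :
    (∑ z ∈ K, G.edgeInc e z) % 2 = 0 := by
  obtain ⟨x, y, hxy⟩ : ∃ x y, G.ends e = s(x, y) :=
    Sym2.inductionOn (G.ends e) (fun a b => ⟨a, b, rfl⟩)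
  by_cases hxy2 : x = y
  · subst hxy2
    have hval : ∀ z ∈ K, G.edgeInc e z = if z = x then 2 else 0 := by
      intro z _
      by_cases hz : z = x
      · subst hz; unfold edgeInc; rw [if_pos hxy, if_pos rfl]
      · exact (edgeInc_eq_zero hxy hz hz).trans (by rw [if_neg hz])
    rw [Finset.sum_congr rfl hval, Finset.sum_ite_eq' K x (fun _ => 2)]
    split <;> omega
  · have hval : ∀ z ∈ K, G.edgeInc e z =
        (if z = x then 1 else 0) + (if z = y then 1 else 0) := by
      intro z _
      by_cases hzx : z = x
      · subst hzx
        rw [edgeInc_eq_one hxy hxy2, if_pos rfl, if_neg hxy2]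
      · by_cases hzy : z = y
        · subst hzy
          rw [edgeInc_eq_one (by rw [hxy, Sym2.eq_swap]) (Ne.symm hxy2),
            if_neg hzx, if_pos rfl]
        · rw [edgeInc_eq_zero hxy hzx hzy, if_neg hzx, if_neg hzy]
    rw [Finset.sum_congr rfl hval, Finset.sum_add_distrib,
      Finset.sum_ite_eq' K x (fun _ => 1), Finset.sum_ite_eq' K y (fun _ => 1)]
    have := hcl x y hxy
    by_cases hx : x ∈ K
    · rw [if_pos hx, if_pos (this.mp hx)]
      rfl
    · rw [if_neg hx, if_neg (fun hy => hx (this.mpr hy))]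
      rfl

/-- Removing an edge from a cycle leaves its endpoints connected. -/
lemma cycle_erase_conn {C : Finset G.E} (hc : G.IsCycle C) {e : G.E} (he : e ∈ C)
    {p q : G.V} (hpq : G.ends e = s(p, q)) : G.ConnectsVia (C.erase e) p q := by
  by_cases hpq2 : p = q
  · subst hpq2; exact Relation.ReflTransGen.refl
  by_contra hconn
  classical
  set D := C.erase e with hD
  set K := Finset.univ.filter (fun x => G.ConnectsVia D p x) with hK
  have hpK : p ∈ K := Finset.mem_filter.mpr ⟨Finset.mem_univ _, Relation.ReflTransGen.refl⟩
  have hqK : q ∉ K := fun hq => hconn (Finset.mem_filter.mp hq).2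
  have hcl : ∀ e' ∈ D, ∀ x y, G.ends e' = s(x, y) → (x ∈ K ↔ y ∈ K) := by
    intro e' he' x y hxy
    simp only [hK, Finset.mem_filter, Finset.mem_univ, true_and]
    constructor
    · intro hx; exact hx.trans (conn_single he' hxy)
    · intro hy; exact hy.trans (conn_symm (conn_single he' hxy))
  have heven : (∑ x ∈ K, G.incCount D x) % 2 = 0 := by
    have : ∀ x ∈ K, G.incCount D x = ∑ e' ∈ D, G.edgeInc e' x :=
      fun x _ => incCount_eq D x
    rw [Finset.sum_congr rfl this, Finset.sum_comm]
    exact sum_mod_two _ _ (fun e' he' => even_sum_edgeInc K (hcl e' he'))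
  have hDp : G.incCount D p = 1 := by
    have h1 : G.incCount D p + G.edgeInc e p = G.incCount C p := by
      rw [incCount_eq, incCount_eq, hD]
      exact Finset.sum_erase_add C _ he
    have h2 : G.edgeInc e p = 1 := edgeInc_eq_one hpq hpq2
    have h3 : G.incCount C p = 0 ∨ G.incCount C p = 2 := hc.2.1 p
    have h4 : G.incCount C p ≠ 0 :=
      incCount_pos he (by rw [hpq, Sym2.mem_iff]; exact Or.inl rfl)
    omega
  have hrest : (∑ x ∈ K.erase p, G.incCount D x) % 2 = 0 := by
    apply sum_mod_two
    intro x hx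
    have hxp : x ≠ p := (Finset.mem_erase.mp hx).1
    have hxq : x ≠ q := fun h => hqK (h ▸ (Finset.mem_erase.mp hx).2)
    have h1 : G.incCount D x + G.edgeInc e x = G.incCount C x := by
      rw [incCount_eq, incCount_eq, hD]
      exact Finset.sum_erase_add C _ he
    have h2 : G.edgeInc e x = 0 := edgeInc_eq_zero hpq hxp hxq
    have h3 : G.incCount C x = 0 ∨ G.incCount C x = 2 := hc.2.1 x
    omega
  have hdecomp : ∑ x ∈ K, G.incCount D x =
      G.incCount D p + ∑ x ∈ K.erase p, G.incCount D x :=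
    (Finset.add_sum_erase K _ hpK).symm
  omega

end UncGraph

namespace UncGraph

variable {G : UncGraph}

lemma walk_last_mem_ne {S : Finset G.E} {u v : G.V} {l : List (G.E × G.V)}
    (h : G.Walk S u l v) (hl : l ≠ []) : v ∈ l.map Prod.snd := by
  induction h with
  | nil => exact absurd rfl hl
  | @cons u' x' v' e' l' _ _ hwalk ih =>
      rcases List.eq_nil_or_concat l' with rfl | _
      · cases hwalk
        simp
      · have : l' ≠ [] := by rintro rfl; simp_all
        simpa using Or.inr (ih this)

lemma path_inc {S : Finset G.E} {u v : G.V} {l : List (G.E × G.V)}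
    (h : G.Walk S u l v) (hnd : (u :: l.map Prod.snd).Nodup) (huv : u ≠ v) :
    G.incCount (l.map Prod.fst).toFinset u = 1 ∧
    G.incCount (l.map Prod.fst).toFinset v = 1 ∧
    (∀ x, x ≠ u → x ≠ v → G.incCount (l.map Prod.fst).toFinset x = 0 ∨
      G.incCount (l.map Prod.fst).toFinset x = 2) ∧
    (∀ x, G.incCount (l.map Prod.fst).toFinset x ≠ 0 →
      G.ConnectsVia (l.map Prod.fst).toFinset u x) ∧
    (∀ x, G.incCount (l.map Prod.fst).toFinset x ≠ 0 → x = u ∨ x ∈ l.map Prod.snd) := by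
  induction h with
  | nil => exact absurd rfl huv
  | @cons u' x' v' e' l' he' hends' hwalk ih =>
      have hnd' : (x' :: l'.map Prod.snd).Nodup := by
        simpa using hnd.of_cons
      have hux : u' ≠ x' := by
        have := hnd
        simp only [List.map_cons, List.nodup_cons, List.mem_cons] at this
        exact fun h => this.1 (Or.inl h)
      have hu_not : u' ∉ x' :: l'.map Prod.snd := by
        have := hnd
        simp only [List.map_cons, List.nodup_cons] at this
        exact this.1
      have he'P : e' ∉ (l'.map Prod.fst).toFinset := by
        intro hmem
        rw [List.mem_toFinset, List.mem_map] at hmem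
        obtain ⟨⟨d, z⟩, hdz, hfst⟩ := hmem
        cases hfst
        obtain ⟨y, hy, hyz⟩ := walk_mem_ends hwalk hdz
        rw [hends'] at hyz
        rw [Sym2.eq_iff] at hyz
        have hzmem : z ∈ l'.map Prod.snd := List.mem_map.mpr ⟨(d, z), hdz, rfl⟩
        rcases hyz with ⟨h1, h2⟩ | ⟨h1, h2⟩
        · exact (List.nodup_cons.mp hnd').1 (by rw [h2]; exact hzmem)
        · exact hu_not (by rw [h1]; exact List.mem_cons_of_mem _ hzmem)
      have hsum : ∀ z, G.incCount ((((e', x') :: l').map Prod.fst).toFinset) z =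
          G.edgeInc e' z + G.incCount (l'.map Prod.fst).toFinset z := by
        intro z
        simp only [List.map_cons, List.toFinset_cons]
        rw [incCount_eq, Finset.sum_insert he'P, incCount_eq]
      rcases List.eq_nil_or_concat l' with rfl | hl'ne
      · cases hwalk
        have hsingle : ∀ z, G.incCount (([(e', x')]).map Prod.fst).toFinset z =
            G.edgeInc e' z := by
          intro z
          simp only [List.map_cons, List.map_nil, List.toFinset_cons, List.toFinset_nil]
          rw [incCount_eq, Finset.sum_insert (Finset.notMem_empty _)]
          simp [incCount_eq]
        refine ⟨?_, ?_, ?_, ?_, ?_⟩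
        · rw [hsingle]; exact edgeInc_eq_one hends' hux
        · rw [hsingle]
          exact edgeInc_eq_one (by rw [hends', Sym2.eq_swap]) (Ne.symm hux)
        · intro x hxu hxv
          rw [hsingle]
          exact Or.inl (edgeInc_eq_zero hends' hxu hxv)
        · intro x hx
          rw [hsingle] at hx
          have : x = u' ∨ x = x' := by
            by_contra hcon
            push_neg at hcon
            exact hx (edgeInc_eq_zero hends' hcon.1 hcon.2)
          rcases this with rfl | rfl
          · exact Relation.ReflTransGen.refl
          · exact conn_single (by simp) hends'
        · intro x hx
          rw [hsingle] at hx
          have : x = u' ∨ x = x' := by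
            by_contra hcon
            push_neg at hcon
            exact hx (edgeInc_eq_zero hends' hcon.1 hcon.2)
          rcases this with rfl | rfl
          · exact Or.inl rfl
          · exact Or.inr (by simp)
      · have hl'ne' : l' ≠ [] := by
          rcases hl'ne with ⟨l'', e'', rfl⟩; simp
        have hxv : x' ≠ v' := by
          intro h
          have := walk_last_mem_ne hwalk hl'ne'
          rw [← h] at this
          exact (List.nodup_cons.mp hnd').1 this
        obtain ⟨ih1, ih2, ih3, ih4, ih5⟩ := ih hnd' hxv
        have huP : G.incCount (l'.map Prod.fst).toFinset u' = 0 := by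
          by_contra hcon
          rcases ih5 u' hcon with h | h
          · exact hux h
          · exact hu_not (List.mem_cons_of_mem _ h)
        have hsubP : (l'.map Prod.fst).toFinset ⊆ (((e', x') :: l').map Prod.fst).toFinset := by
          simp only [List.map_cons, List.toFinset_cons]
          exact Finset.subset_insert _ _
        have huv' : u' ≠ v' := huv
        refine ⟨?_, ?_, ?_, ?_, ?_⟩
        · rw [hsum]
          rw [edgeInc_eq_one hends' hux, huP]
        · rw [hsum]
          rw [edgeInc_eq_zero hends' (Ne.symm huv') (Ne.symm hxv), ih2]
        · intro x hxu hxv2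
          rw [hsum]
          by_cases hxx : x = x'
          · subst hxx
            rw [edgeInc_eq_one (by rw [hends', Sym2.eq_swap]) (Ne.symm hux), ih1]
            exact Or.inr rfl
          · rw [edgeInc_eq_zero hends' hxu hxx]
            rcases ih3 x hxx hxv2 with h | h
            · exact Or.inl (by omega)
            · exact Or.inr (by omega)
        · intro x hx
          rw [hsum] at hx
          by_cases hxu : x = u'
          · subst hxu; exact Relation.ReflTransGen.refl
          · have hstep : G.ConnectsVia ((((e', x') :: l').map Prod.fst).toFinset) u' x' :=
              conn_single (by simp) hends'
            by_cases hxx : x = x'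
            · subst hxx; exact hstep
            · have : G.incCount (l'.map Prod.fst).toFinset x ≠ 0 := by
                rw [edgeInc_eq_zero hends' hxu hxx] at hx
                omega
              exact hstep.trans (conn_mono hsubP (ih4 x this))
        · intro x hx
          rw [hsum] at hx
          by_cases hxu : x = u'
          · exact Or.inl hxu
          · by_cases hxx : x = x'
            · exact Or.inr (by subst hxx; simp)
            · have : G.incCount (l'.map Prod.fst).toFinset x ≠ 0 := by
                rw [edgeInc_eq_zero hends' hxu hxx] at hx
                omega
              rcases ih5 x this with h | h
              · exact absurd h hxx
              · exact Or.inr (by simp [h])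

/-- Fundamental cycle: a non-tree edge together with a simple tree walk between
its endpoints forms a cycle. -/
lemma fund_cycle {T : Finset G.E} {g : G.E} (hg : g ∉ T) {a b : G.V}
    (hab : G.ends g = s(a, b)) (hne : a ≠ b) {l : List (G.E × G.V)}
    (hw : G.Walk T a l b) (hnd : (a :: l.map Prod.snd).Nodup) :
    G.IsCycleOf T g (insert g (l.map Prod.fst).toFinset) := by
  obtain ⟨hp1, hp2, hp3, hp4, hp5⟩ := path_inc hw hnd hne
  have hPT : (l.map Prod.fst).toFinset ⊆ T := by
    intro d hd
    rw [List.mem_toFinset, List.mem_map] at hd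
    obtain ⟨p, hp, rfl⟩ := hd
    exact walk_edge_mem hw hp
  have hgP : g ∉ (l.map Prod.fst).toFinset := fun h => hg (hPT h)
  have hsum : ∀ z, G.incCount (insert g (l.map Prod.fst).toFinset) z =
      G.edgeInc g z + G.incCount (l.map Prod.fst).toFinset z := by
    intro z
    rw [incCount_eq, Finset.sum_insert hgP, incCount_eq]
  have hconn_a : ∀ x, G.incCount (insert g (l.map Prod.fst).toFinset) x ≠ 0 →
      G.ConnectsVia (insert g (l.map Prod.fst).toFinset) a x := by
    intro x hx
    rw [hsum] at hx
    have hsub : (l.map Prod.fst).toFinset ⊆ insert g (l.map Prod.fst).toFinset :=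
      Finset.subset_insert _ _
    by_cases hxa : x = a
    · subst hxa; exact Relation.ReflTransGen.refl
    · by_cases hxb : x = b
      · subst hxb
        exact conn_mono hsub (hp4 _ (by omega))
      · have : G.incCount (l.map Prod.fst).toFinset x ≠ 0 := by
          rw [edgeInc_eq_zero hab hxa hxb] at hx
          omega
        exact conn_mono hsub (hp4 x this)
  refine ⟨⟨⟨g, Finset.mem_insert_self _ _⟩, ?_, ?_⟩, Finset.mem_insert_self _ _, ?_⟩
  · intro x
    rw [hsum]
    by_cases hxa : x = a
    · subst hxa
      rw [edgeInc_eq_one hab hne, hp1]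
      exact Or.inr rfl
    · by_cases hxb : x = b
      · subst hxb
        rw [edgeInc_eq_one (by rw [hab, Sym2.eq_swap]) (Ne.symm hne), hp2]
        exact Or.inr rfl
      · rw [edgeInc_eq_zero hab hxa hxb]
        rcases hp3 x hxa hxb with h | h
        · exact Or.inl (by omega)
        · exact Or.inr (by omega)
  · intro x y hx hy
    exact (conn_symm (hconn_a x hx)).trans (hconn_a y hy)
  · exact Finset.insert_subset_insert g hPT

end UncGraph

namespace UncGraph

variable {G : UncGraph}

/-- Exchanging an edge of a spanning tree for an edge crossing the induced cut. -/
lemma swap_spanning {S : Finset G.E} (hS : G.IsSpanningTree S) {e g : G.E}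
    (he : e ∈ S) (hg : g ∉ S) {a b : G.V} (hab : G.ends g = s(a, b))
    (hcut : ¬ G.ConnectsVia (S.erase e) a b) :
    G.IsSpanningTree (insert g (S.erase e)) := by
  obtain ⟨p, q, hpq⟩ : ∃ p q, G.ends e = s(p, q) :=
    Sym2.inductionOn (G.ends e) (fun x y => ⟨x, y, rfl⟩)
  have hside : ∀ x : G.V, G.ConnectsVia (S.erase e) x p ∨ G.ConnectsVia (S.erase e) x q := by
    intro x
    rcases conn_split (e := e) (hS.1 x p) hpq with h | ⟨h1, _⟩ | ⟨h1, _⟩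
    · exact Or.inl h
    · exact Or.inl h1
    · exact Or.inr h1
  have hgstep : G.ConnectsVia (insert g (S.erase e)) a b :=
    conn_single (Finset.mem_insert_self _ _) hab
  have hsub : S.erase e ⊆ insert g (S.erase e) := Finset.subset_insert _ _
  have hpq_conn : G.ConnectsVia (insert g (S.erase e)) p q := by
    rcases hside a with ha | ha <;> rcases hside b with hb | hb
    · exact absurd (ha.trans (conn_symm hb)) hcut
    · exact ((conn_mono hsub (conn_symm ha)).trans hgstep).trans (conn_mono hsub hb)
    · exact (conn_mono hsub (conn_symm hb)).trans
        ((conn_symm hgstep).trans (conn_mono hsub ha))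
    · exact absurd (ha.trans (conn_symm hb)) hcut
  constructor
  · intro x y
    exact conn_rewire (hS.1 x y) hpq hsub hpq_conn
  · rw [Finset.card_insert_of_notMem (fun h => hg (Finset.mem_of_mem_erase h)),
      Finset.card_erase_of_mem he]
    have : 1 ≤ S.card := Finset.card_pos.mpr ⟨e, he⟩
    have := hS.2
    omega

/-- The exchange inequality for minimum spanning trees. -/
lemma mst_swap_le {wf : G.E → ℝ} {S : Finset G.E} (hS : G.IsMST wf S) {e g : G.E}
    (he : e ∈ S) (hg : g ∉ S) {a b : G.V} (hab : G.ends g = s(a, b))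
    (hcut : ¬ G.ConnectsVia (S.erase e) a b) : wf e ≤ wf g := by
  have hsp := swap_spanning hS.1 he hg hab hcut
  have hle := hS.2 _ hsp
  rw [Finset.sum_insert (fun h => hg (Finset.mem_of_mem_erase h))] at hle
  have herase : ∑ x ∈ S.erase e, wf x + wf e = ∑ x ∈ S, wf x :=
    Finset.sum_erase_add S wf he
  linarith

lemma eps_helper {d c ε₁ : ℝ} (hc : c ≤ 1) (hε₁ : 0 < ε₁)
    (H : ∀ ε₀ > 0, ∃ ε, 0 < ε ∧ ε < ε₀ ∧ 0 ≤ d + c * ε) :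
    ∃ ε₂, 0 < ε₂ ∧ ε₂ ≤ ε₁ ∧ ∀ ε, 0 < ε → ε < ε₂ → 0 ≤ d + c * ε := by
  have hd : 0 ≤ d := by
    by_contra hd
    push_neg at hd
    obtain ⟨ε, hε0, hεlt, hεd⟩ := H (min ε₁ (-d / 2)) (lt_min hε₁ (by linarith))
    have h1 : ε < -d / 2 := lt_of_lt_of_le hεlt (min_le_right _ _)
    nlinarith
  rcases le_or_gt 0 c with hc0 | hc0
  · exact ⟨ε₁, hε₁, le_refl _, fun ε hε _ => by nlinarith⟩
  · obtain ⟨ε, hε0, hεlt, hεd⟩ := H ε₁ hε₁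
    exact ⟨ε, hε0, le_of_lt hεlt, fun ε' hε' hlt => by nlinarith⟩

/-- Strict comparison of lower-limit weights from uniqueness of the lower limit tree. -/
lemma limit_strict_lower {T : Finset G.E} (hT : G.UniqueLimitTrees T) {e g : G.E}
    (he : e ∈ T) (hg : g ∉ T) {a b : G.V} (hab : G.ends g = s(a, b))
    (hcut : ¬ G.ConnectsVia (T.erase e) a b) :
    ∃ ε₀ > 0, ∀ ε, 0 < ε → ε < ε₀ → G.lowerWeight ε e < G.lowerWeight ε g := by
  obtain ⟨ε₁, hε₁, hMST⟩ := hT.1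
  by_contra hcon
  push_neg at hcon
  have H : ∀ ε₀ > 0, ∃ ε, 0 < ε ∧ ε < ε₀ ∧
      0 ≤ (G.L e - G.L g) +
        ((if G.L e = G.U e then 0 else 1) - (if G.L g = G.U g then 0 else 1)) * ε := by
    intro ε₀ hε₀
    obtain ⟨ε, hε0, hεlt, hle⟩ := hcon ε₀ hε₀
    refine ⟨ε, hε0, hεlt, ?_⟩
    unfold lowerWeight at hle
    split_ifs at hle ⊢ <;> linarith
  obtain ⟨ε₂, hε₂0, hε₂le, hall⟩ := eps_helper (by split_ifs <;> norm_num) hε₁ H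
  have hLLT : G.IsLowerLimitTree (insert g (T.erase e)) := by
    refine ⟨ε₂, hε₂0, fun ε hε0 hεlt => ?_⟩
    have hMSTε := hMST ε hε0 (lt_of_lt_of_le hεlt hε₂le)
    have hsp := swap_spanning hMSTε.1 he hg hab hcut
    have hwle : G.lowerWeight ε g ≤ G.lowerWeight ε e := by
      have hineq := hall ε hε0 hεlt
      unfold lowerWeight
      split_ifs at hineq ⊢ <;> linarith
    refine ⟨hsp, fun T' hT' => ?_⟩
    have h1 := hMSTε.2 T' hT'
    have h2 : ∑ x ∈ insert g (T.erase e), G.lowerWeight ε x ≤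
        ∑ x ∈ T, G.lowerWeight ε x := by
      rw [Finset.sum_insert (fun h => hg (Finset.mem_of_mem_erase h))]
      have := Finset.sum_erase_add T (G.lowerWeight ε) he
      linarith
    linarith
  have := hT.2.2.1 _ hLLT
  have : g ∈ T := this ▸ Finset.mem_insert_self g (T.erase e)
  exact hg this

/-- Strict comparison of upper-limit weights from uniqueness of the upper limit tree. -/
lemma limit_strict_upper {T : Finset G.E} (hT : G.UniqueLimitTrees T) {e g : G.E}
    (he : e ∈ T) (hg : g ∉ T) {a b : G.V} (hab : G.ends g = s(a, b))
    (hcut : ¬ G.ConnectsVia (T.erase e) a b) :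
    ∃ ε₀ > 0, ∀ ε, 0 < ε → ε < ε₀ → G.upperWeight ε e < G.upperWeight ε g := by
  obtain ⟨ε₁, hε₁, hMST⟩ := hT.2.1
  by_contra hcon
  push_neg at hcon
  have H : ∀ ε₀ > 0, ∃ ε, 0 < ε ∧ ε < ε₀ ∧
      0 ≤ ((if G.L e = G.U e then G.L e else G.U e) -
            (if G.L g = G.U g then G.L g else G.U g)) +
        ((if G.L g = G.U g then 0 else 1) - (if G.L e = G.U e then 0 else 1)) * ε := by
    intro ε₀ hε₀
    obtain ⟨ε, hε0, hεlt, hle⟩ := hcon ε₀ hε₀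
    refine ⟨ε, hε0, hεlt, ?_⟩
    unfold upperWeight at hle
    split_ifs at hle ⊢ <;> linarith
  obtain ⟨ε₂, hε₂0, hε₂le, hall⟩ := eps_helper (by split_ifs <;> norm_num) hε₁ H
  have hULT : G.IsUpperLimitTree (insert g (T.erase e)) := by
    refine ⟨ε₂, hε₂0, fun ε hε0 hεlt => ?_⟩
    have hMSTε := hMST ε hε0 (lt_of_lt_of_le hεlt hε₂le)
    have hsp := swap_spanning hMSTε.1 he hg hab hcut
    have hwle : G.upperWeight ε g ≤ G.upperWeight ε e := by
      have hineq := hall ε hε0 hεlt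
      unfold upperWeight
      split_ifs at hineq ⊢ <;> linarith
    refine ⟨hsp, fun T' hT' => ?_⟩
    have h1 := hMSTε.2 T' hT'
    have h2 : ∑ x ∈ insert g (T.erase e), G.upperWeight ε x ≤
        ∑ x ∈ T, G.upperWeight ε x := by
      rw [Finset.sum_insert (fun h => hg (Finset.mem_of_mem_erase h))]
      have := Finset.sum_erase_add T (G.upperWeight ε) he
      linarith
    linarith
  have := hT.2.2.2 _ hULT
  have : g ∈ T := this ▸ Finset.mem_insert_self g (T.erase e)
  exact hg this

end UncGraph

namespace UncGraph

variable {G : UncGraph}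

lemma simple_walk_split_avoid {S : Finset G.E} {u v y z : G.V} {d : G.E}
    {l l₁ l₂ : List (G.E × G.V)} (hl : l = l₁ ++ (d, z) :: l₂)
    (hw1 : G.Walk S u l₁ y) (hw2 : G.Walk S z l₂ v)
    (hnd : (u :: l.map Prod.snd).Nodup) (hdyz : G.ends d = s(y, z)) (hyz : y ≠ z) :
    d ∉ l₁.map Prod.fst ∧ d ∉ l₂.map Prod.fst := by
  subst hl
  have hnd' : ((u :: l₁.map Prod.snd) ++ z :: l₂.map Prod.snd).Nodup := by
    simpa using hnd
  rw [List.nodup_append] at hnd'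
  obtain ⟨hnd1, hnd2, hdisj⟩ := hnd'
  have hz2 : z ∉ l₂.map Prod.snd := (List.nodup_cons.mp hnd2).1
  have hz1 : z ∉ u :: l₁.map Prod.snd := fun hmem =>
    hdisj _ hmem _ List.mem_cons_self rfl
  constructor
  · intro hd1
    rw [List.mem_map] at hd1
    obtain ⟨⟨d', z'⟩, hdz', hfst⟩ := hd1
    cases hfst
    obtain ⟨y', hy', hyz'⟩ := walk_mem_ends hw1 hdz'
    have hz'mem : z' ∈ l₁.map Prod.snd := List.mem_map.mpr ⟨_, hdz', rfl⟩
    rw [hdyz, Sym2.eq_iff] at hyz'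
    rcases hyz' with ⟨h1, h2⟩ | ⟨h1, h2⟩
    · exact hz1 (List.mem_cons_of_mem _ (by rw [h2]; exact hz'mem))
    · rcases hy' with h3 | h3
      · exact hz1 (by rw [h2, h3]; exact List.mem_cons_self)
      · exact hz1 (List.mem_cons_of_mem _ (by rw [h2]; exact h3))
  · intro hd2
    rw [List.mem_map] at hd2
    obtain ⟨⟨d', z'⟩, hdz', hfst⟩ := hd2
    cases hfst
    obtain ⟨y', hy', hyz'⟩ := walk_mem_ends hw2 hdz'
    have hz'mem : z' ∈ l₂.map Prod.snd := List.mem_map.mpr ⟨_, hdz', rfl⟩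
    rw [hdyz, Sym2.eq_iff] at hyz'
    rcases hyz' with ⟨h1, h2⟩ | ⟨h1, h2⟩
    · exact hz2 (by rw [h2]; exact hz'mem)
    · have hy_mem : y = u ∨ y ∈ l₁.map Prod.snd := walk_last_mem hw1
      have : y ∈ l₂.map Prod.snd := by rw [h1]; exact hz'mem
      rcases hy_mem with rfl | hy_mem
      · exact hdisj _ List.mem_cons_self _ (List.mem_cons_of_mem _ this) rfl
      · exact hdisj _ (List.mem_cons_of_mem _ hy_mem) _ (List.mem_cons_of_mem _ this) rfl

end UncGraph

namespace UncGraph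

variable {G : UncGraph}

lemma mem_I_nontrivial {e : G.E} (hnt : G.L e < G.U e) {x : ℝ} :
    x ∈ G.I e ↔ G.L e < x ∧ x < G.U e := by
  unfold I
  simp only [Set.mem_setOf_eq]
  constructor
  · rintro (⟨h1, _⟩ | h)
    · exact absurd h1 (ne_of_lt hnt)
    · exact h
  · exact Or.inr

lemma mem_I_trivial {e : G.E} (ht : G.L e = G.U e) {x : ℝ} :
    x ∈ G.I e ↔ x = G.L e := by
  unfold I
  simp only [Set.mem_setOf_eq]
  constructor
  · rintro (⟨_, h⟩ | ⟨h1, h2⟩)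
    · exact h
    · rw [ht] at h1; linarith
  · intro h; exact Or.inl ⟨ht, h⟩

end UncGraph

/-- in an instance with unique `T_L = T_U`, let `f ∉ T_L` and
let `l` be an edge on the cycle `C` closed by `f` with `I_l ∩ I_f ≠ ∅` that does
not lie on the cycle closed by any earlier edge (smaller lower limit) outside
`T_L`. Then `{l, f}` is a witness set; moreover if `w l ∈ I_f` then `f` is
mandatory. -/
theorem cut_witness_set
    (G : UncGraph) (w : G.E → ℝ) (hw : G.Valid w)
    (T : Finset G.E) (hT : G.UniqueLimitTrees T)
    (f : G.E) (hf : f ∉ T)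
    (C : Finset G.E) (hC : G.IsCycleOf T f C)
    (li : G.E) (hli : li ∈ C) (hlif : li ≠ f)
    (hint : (G.I li ∩ G.I f).Nonempty)
    (hfirst : ∀ f', f' ∉ T → f' ≠ f → G.L f' < G.L f →
      ∀ C', G.IsCycleOf T f' C' → li ∉ C') :
    G.IsWitnessSet w {li, f} ∧ (w li ∈ G.I f → G.Mandatory w f) := by
  classical
  obtain ⟨v₀, hv₀li, hv₀f⟩ := hint
  obtain ⟨ε₁, hε₁, hLmst⟩ := hT.1
  have hTsp : G.IsSpanningTree T := (hLmst (ε₁ / 2) (by linarith) (by linarith)).1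
  have hCc : G.IsCycle C := hC.1
  have hfC : f ∈ C := hC.2.1
  have hCsub : C ⊆ insert f T := hC.2.2
  have hliT : li ∈ T := by
    rcases Finset.mem_insert.mp (hCsub hli) with h | h
    · exact absurd h hlif
    · exact h
  obtain ⟨pl, ql, hplql⟩ : ∃ p q, G.ends li = s(p, q) :=
    Sym2.inductionOn (G.ends li) (fun x y => ⟨x, y, rfl⟩)
  have hbridge_li : ¬ G.ConnectsVia (T.erase li) pl ql := UncGraph.tree_bridge hTsp hliT hplql
  obtain ⟨af, bf, haf⟩ : ∃ p q, G.ends f = s(p, q) :=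
    Sym2.inductionOn (G.ends f) (fun x y => ⟨x, y, rfl⟩)
  have hsub1 : C.erase li ⊆ insert f (T.erase li) := by
    intro x hx
    obtain ⟨hx1, hx2⟩ := Finset.mem_erase.mp hx
    rcases Finset.mem_insert.mp (hCsub hx2) with h | h
    · exact Finset.mem_insert.mpr (Or.inl h)
    · exact Finset.mem_insert.mpr (Or.inr (Finset.mem_erase.mpr ⟨hx1, h⟩))
  have hconn_pq : G.ConnectsVia (insert f (T.erase li)) pl ql :=
    UncGraph.conn_mono hsub1 (UncGraph.cycle_erase_conn hCc hli hplql)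
  -- f crosses the cut of T at li
  have hXf : ¬ G.ConnectsVia (T.erase li) af bf := fun hcontra =>
    hbridge_li (UncGraph.conn_insert_collapse hconn_pq haf hcontra)
  have hafbf : af ≠ bf := fun h => hXf (h ▸ Relation.ReflTransGen.refl)
  obtain ⟨εL, hεL, hLs⟩ := UncGraph.limit_strict_lower hT hliT hf haf hXf
  obtain ⟨εU, hεU, hUs⟩ := UncGraph.limit_strict_upper hT hliT hf haf hXf
  -- f is nontrivial
  have hNf : G.L f < G.U f := by
    by_contra hft'
    have hft : G.L f = G.U f := le_antisymm (G.LU f) (not_lt.mp hft')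
    have hvf : v₀ = G.L f := (G.mem_I_trivial hft).mp hv₀f
    rcases le_or_gt (G.U li) (G.L li) with hlt | hlnt
    · -- li trivial as well
      have hlt' : G.L li = G.U li := le_antisymm (G.LU li) hlt
      have hvl : v₀ = G.L li := (G.mem_I_trivial hlt').mp hv₀li
      have h1 := hLs (εL / 2) (by linarith) (by linarith)
      unfold UncGraph.lowerWeight at h1
      rw [if_pos hlt', if_pos hft] at h1
      linarith
    · -- li nontrivial: U li ≤ L f, contradicting v₀ < U li, v₀ = L f
      have hUle : G.U li ≤ G.L f := by
        by_contra hgt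
        push_neg at hgt
        have hmin : 0 < min εU (G.U li - G.L f) / 2 := by
          have : 0 < min εU (G.U li - G.L f) := lt_min hεU (by linarith)
          linarith
        have h1 := hUs (min εU (G.U li - G.L f) / 2) hmin
          (by have := min_le_left εU (G.U li - G.L f); linarith)
        unfold UncGraph.upperWeight at h1
        rw [if_neg (ne_of_lt hlnt), if_pos hft] at h1
        have := min_le_right εU (G.U li - G.L f)
        linarith
      have := (G.mem_I_nontrivial hlnt).mp hv₀li
      linarith
  have hv₀f' : G.L f < v₀ ∧ v₀ < G.U f := (G.mem_I_nontrivial hNf).mp hv₀f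
  -- li is nontrivial
  have hNli : G.L li < G.U li := by
    by_contra hlt
    have hlt' : G.L li = G.U li := le_antisymm (G.LU li) (not_lt.mp hlt)
    have hvl : v₀ = G.L li := (G.mem_I_trivial hlt').mp hv₀li
    have hLle : G.L li ≤ G.L f := by
      by_contra hgt
      push_neg at hgt
      have hmin : 0 < min εL (G.L li - G.L f) / 2 := by
        have : 0 < min εL (G.L li - G.L f) := lt_min hεL (by linarith)
        linarith
      have h1 := hLs (min εL (G.L li - G.L f) / 2) hmin
        (by have := min_le_left εL (G.L li - G.L f); linarith)
      unfold UncGraph.lowerWeight at h1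
      rw [if_pos hlt', if_neg (ne_of_lt hNf)] at h1
      have := min_le_right εL (G.L li - G.L f)
      linarith
    linarith [hv₀f'.1]
  have hv₀li' : G.L li < v₀ ∧ v₀ < G.U li := (G.mem_I_nontrivial hNli).mp hv₀li
  have hLlilf : G.L li < G.L f := by
    have h1 := hLs (εL / 2) (by linarith) (by linarith)
    unfold UncGraph.lowerWeight at h1
    rw [if_neg (ne_of_lt hNli), if_neg (ne_of_lt hNf)] at h1
    linarith
  have hLfUli : G.L f < G.U li := by linarith [hv₀li'.2, hv₀f'.1]
  -- the key contradiction
  have key : ∀ Q, G.Feasible w Q → f ∉ Q →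
      ∀ α, α ∈ G.I li → G.L f < α → (li ∉ Q ∨ α = w li) → False := by
    intro Q hQ hfQ α hαI hαgt hαw
    obtain ⟨T', hT'⟩ := hQ
    have hcompat_w : G.Compatible w Q w := ⟨fun _ _ => rfl, hw⟩
    have hT'sp : G.IsSpanningTree T' := (hT' w hcompat_w).1
    -- Step A: f cannot lie in the verified tree T'
    have hfT' : f ∉ T' := by
      intro hfT'
      have hbrf : ¬ G.ConnectsVia (T'.erase f) af bf := UncGraph.tree_bridge hT'sp hfT' haf
      have hCf : G.ConnectsVia (C.erase f) af bf := UncGraph.cycle_erase_conn hCc hfC haf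
      obtain ⟨lw, hlw⟩ := UncGraph.conn_to_walk hCf
      obtain ⟨l₁, d, z, l₂, y, hsplit, hww1, hdyz, hncross, hww2⟩ :=
        UncGraph.walk_cross hlw hbrf
      have hdCe : d ∈ C.erase f :=
        UncGraph.walk_edge_mem hlw (p := (d, z)) (by rw [hsplit]; simp)
      have hdne : d ≠ f := (Finset.mem_erase.mp hdCe).1
      have hdC : d ∈ C := (Finset.mem_erase.mp hdCe).2
      have hdT : d ∈ T := by
        rcases Finset.mem_insert.mp (hCsub hdC) with h | h
        · exact absurd h hdne
        · exact h
      have hdT' : d ∉ T' := fun hmem =>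
        hncross (UncGraph.conn_single (Finset.mem_erase.mpr ⟨hdne, hmem⟩) hdyz)
      have hineq : ∀ wf, G.Compatible w Q wf → wf f ≤ wf d := fun wf hc =>
        UncGraph.mst_swap_le (hT' wf hc) hfT' hdT' hdyz hncross
      have hXd : ¬ G.ConnectsVia (T.erase d) af bf := by
        intro hcontra
        have hCd : G.ConnectsVia (C.erase d) y z := UncGraph.cycle_erase_conn hCc hdC hdyz
        have hsub2 : C.erase d ⊆ insert f (T.erase d) := by
          intro x hx
          obtain ⟨hx1, hx2⟩ := Finset.mem_erase.mp hx
          rcases Finset.mem_insert.mp (hCsub hx2) with h | h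
          · exact Finset.mem_insert.mpr (Or.inl h)
          · exact Finset.mem_insert.mpr (Or.inr (Finset.mem_erase.mpr ⟨hx1, h⟩))
        exact (UncGraph.tree_bridge hTsp hdT hdyz)
          (UncGraph.conn_insert_collapse (UncGraph.conn_mono hsub2 hCd) haf hcontra)
      obtain ⟨εd, hεd, hUd⟩ := UncGraph.limit_strict_upper hT hdT hf haf hXd
      by_cases hdcase : d ∈ Q ∨ G.L d = G.U d
      · have hwdval : ∀ wf, G.Compatible w Q wf → wf d = w d := by
          intro wf hc
          rcases hdcase with h | h
          · exact hc.1 d h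
          · rw [(G.mem_I_trivial h).mp (hc.2 d), ← (G.mem_I_trivial h).mp (hw d)]
        have hge : ∀ δ, 0 < δ → δ < G.U f - G.L f → G.U f - δ ≤ w d := by
          intro δ h1 h2
          set wf : G.E → ℝ := fun x => if x = f then G.U f - δ else w x with hwf
          have hcomp : G.Compatible w Q wf := by
            constructor
            · intro e heQ
              have hef : e ≠ f := fun h => hfQ (h ▸ heQ)
              simp [hwf, hef]
            · intro e
              by_cases hef : e = f
              · subst hef
                simp only [hwf, if_pos rfl]
                exact (G.mem_I_nontrivial hNf).mpr ⟨by linarith, by linarith⟩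
              · simp only [hwf, if_neg hef]
                exact hw e
          have h3 := hineq wf hcomp
          rw [hwdval wf hcomp] at h3
          have hwff : wf f = G.U f - δ := by simp [hwf]
          rw [hwff] at h3
          exact h3
        have hwdUf : G.U f ≤ w d := by
          by_contra hlt
          push_neg at hlt
          have hδpos : 0 < min ((G.U f - w d) / 2) ((G.U f - G.L f) / 2) :=
            lt_min (by linarith) (by linarith)
          have h4 := hge _ hδpos
            (by have := min_le_right ((G.U f - w d) / 2) ((G.U f - G.L f) / 2); linarith)
          have := min_le_left ((G.U f - w d) / 2) ((G.U f - G.L f) / 2)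
          linarith
        have hwdlt : w d < G.U f := by
          rcases le_or_gt (G.U d) (G.L d) with h | h
          · have htd : G.L d = G.U d := le_antisymm (G.LU d) h
            have h1 := hUd (εd / 2) (by linarith) (by linarith)
            unfold UncGraph.upperWeight at h1
            rw [if_pos htd, if_neg (ne_of_lt hNf)] at h1
            rw [(G.mem_I_trivial htd).mp (hw d)]
            linarith
          · have h1 := hUd (εd / 2) (by linarith) (by linarith)
            unfold UncGraph.upperWeight at h1
            rw [if_neg (ne_of_lt h), if_neg (ne_of_lt hNf)] at h1
            have := (G.mem_I_nontrivial h).mp (hw d)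
            linarith
        linarith
      · push_neg at hdcase
        obtain ⟨hdQ, hdnt'⟩ := hdcase
        have hdnt : G.L d < G.U d := lt_of_le_of_ne (G.LU d) hdnt'
        set δ := min ((G.U d - G.L d) / 2) ((G.U f - G.L f) / 2) with hδ
        have hδ1 : δ ≤ (G.U d - G.L d) / 2 := min_le_left _ _
        have hδ2 : δ ≤ (G.U f - G.L f) / 2 := min_le_right _ _
        have hδpos : 0 < δ := lt_min (by linarith) (by linarith)
        set wf : G.E → ℝ := fun x => if x = f then G.U f - δ else
          if x = d then G.U d - δ else w x with hwf
        have hcomp : G.Compatible w Q wf := by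
          constructor
          · intro e heQ
            have h1 : e ≠ f := fun h => hfQ (h ▸ heQ)
            have h2 : e ≠ d := fun h => hdQ (h ▸ heQ)
            simp [hwf, h1, h2]
          · intro e
            by_cases hef : e = f
            · subst hef
              simp only [hwf, if_pos rfl]
              exact (G.mem_I_nontrivial hNf).mpr ⟨by linarith, by linarith⟩
            · by_cases hed : e = d
              · subst hed
                have hv : wf e = G.U e - δ := by simp [hwf, hef]
                rw [hv]
                exact (G.mem_I_nontrivial hdnt).mpr ⟨by linarith, by linarith⟩
              · simp only [hwf, if_neg hef, if_neg hed]
                exact hw e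
        have h3 := hineq wf hcomp
        have hwff : wf f = G.U f - δ := by simp [hwf]
        have hwfd : wf d = G.U d - δ := by simp [hwf, hdne]
        rw [hwff, hwfd] at h3
        have h1 := hUd (εd / 2) (by linarith) (by linarith)
        unfold UncGraph.upperWeight at h1
        rw [if_neg (ne_of_lt hdnt), if_neg (ne_of_lt hNf)] at h1
        linarith
    -- values of crossing edges other than li and f exceed L f
    have hcrossval : ∀ e', e' ≠ li → e' ≠ f → ∀ y z, G.ends e' = s(y, z) →
        ¬ G.ConnectsVia (T.erase li) y z → G.L f < w e' := by
      intro e' hne_li hne_f y z hyz hncross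
      have hyz_ne : y ≠ z := fun h => hncross (h ▸ Relation.ReflTransGen.refl)
      have he'T : e' ∉ T := fun hmem =>
        hncross (UncGraph.conn_single (Finset.mem_erase.mpr ⟨hne_li, hmem⟩) hyz)
      obtain ⟨lw, hlwalk, hlnd⟩ := UncGraph.exists_simple_walk (hTsp.1 y z)
      obtain ⟨l₁, d, z₁, l₂, y₁, hsplit, hww1, hdyz, hncr', hww2⟩ :=
        UncGraph.walk_cross hlwalk hncross
      have hdT : d ∈ T := UncGraph.walk_edge_mem hlwalk (p := (d, z₁)) (by rw [hsplit]; simp)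
      have hd_li : d = li := by
        by_contra hdnel
        exact hncr' (UncGraph.conn_single (Finset.mem_erase.mpr ⟨hdnel, hdT⟩) hdyz)
      have hcyc := UncGraph.fund_cycle he'T hyz hyz_ne hlwalk hlnd
      have hliC' : li ∈ insert e' (lw.map Prod.fst).toFinset := by
        refine Finset.mem_insert_of_mem ?_
        rw [List.mem_toFinset, ← hd_li]
        rw [hsplit]
        simp
      by_cases he't : G.L e' = G.U e'
      · have hUle : G.U li ≤ G.L e' := by
          by_contra hgt
          push_neg at hgt
          obtain ⟨εg, hεg, hUg⟩ := UncGraph.limit_strict_upper hT hliT he'T hyz hncross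
          have hmin : 0 < min εg (G.U li - G.L e') / 2 := by
            have : 0 < min εg (G.U li - G.L e') := lt_min hεg (by linarith)
            linarith
          have h1 := hUg (min εg (G.U li - G.L e') / 2) hmin
            (by have := min_le_left εg (G.U li - G.L e'); linarith)
          unfold UncGraph.upperWeight at h1
          rw [if_neg (ne_of_lt hNli), if_pos he't] at h1
          have := min_le_right εg (G.U li - G.L e')
          linarith
        rw [(G.mem_I_trivial he't).mp (hw e')]
        linarith
      · have hLge : ¬ (G.L e' < G.L f) := fun hlt =>
          (hfirst e' he'T hne_f hlt _ hcyc) hliC'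
        push_neg at hLge
        have he'nt : G.L e' < G.U e' := lt_of_le_of_ne (G.LU e') he't
        have := (G.mem_I_nontrivial he'nt).mp (hw e')
        linarith
    -- choose the low value b for f
    set Xs : Finset G.E := Finset.univ.filter (fun e' => e' ≠ li ∧ e' ≠ f ∧
      ∃ y z, G.ends e' = s(y, z) ∧ ¬ G.ConnectsVia (T.erase li) y z) with hXs
    set vals : Finset ℝ := insert α (insert (G.U f) (Xs.image w)) with hvals
    have hvne : vals.Nonempty := ⟨α, by simp [hvals]⟩
    set m := vals.min' hvne with hm'
    have hm : G.L f < m := by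
      rw [hm', Finset.lt_min'_iff]
      intro x hx
      rw [hvals] at hx
      rcases Finset.mem_insert.mp hx with rfl | hx
      · exact hαgt
      rcases Finset.mem_insert.mp hx with rfl | hx
      · exact hNf
      obtain ⟨e', he'Xs, rfl⟩ := Finset.mem_image.mp hx
      obtain ⟨h1, h2, y, z, hyz, hncross⟩ := (Finset.mem_filter.mp he'Xs).2
      exact hcrossval e' h1 h2 y z hyz hncross
    set b := (G.L f + m) / 2 with hb
    have hbL : G.L f < b := by rw [hb]; linarith
    have hbm : b < m := by rw [hb]; linarith
    have hmUf : m ≤ G.U f := Finset.min'_le _ _ (by simp [hvals])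
    have hbIf : b ∈ G.I f := (G.mem_I_nontrivial hNf).mpr ⟨hbL, by linarith⟩
    set wf : G.E → ℝ := fun x => if x = f then b else if x = li then α else w x with hwf
    have hcomp : G.Compatible w Q wf := by
      constructor
      · intro e heQ
        have h1 : e ≠ f := fun h => hfQ (h ▸ heQ)
        by_cases h2 : e = li
        · subst h2
          rcases hαw with h | h
          · exact absurd heQ h
          · simp [hwf, h1, h]
        · simp [hwf, h1, h2]
      · intro e
        by_cases h1 : e = f
        · subst h1; simpa [hwf] using hbIf
        · by_cases h2 : e = li
          · subst h2; simpa [hwf, h1] using hαI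
          · simp only [hwf, if_neg h1, if_neg h2]
            exact hw e
    have hmst := hT' wf hcomp
    -- T' must cross the cut of T at li; the crossing edge is too expensive
    obtain ⟨lw, hlwalk, hlnd⟩ := UncGraph.exists_simple_walk (hT'sp.1 af bf)
    obtain ⟨l₁, e', z₁, l₂, y₁, hsplit, hww1, he'yz, hncr, hww2⟩ :=
      UncGraph.walk_cross hlwalk hXf
    have he'T' : e' ∈ T' := UncGraph.walk_edge_mem hlwalk (p := (e', z₁)) (by rw [hsplit]; simp)
    have he'f : e' ≠ f := fun h => hfT' (h ▸ he'T')
    have hy1z1 : y₁ ≠ z₁ := fun h => hncr (h ▸ Relation.ReflTransGen.refl)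
    have hbr' : ¬ G.ConnectsVia (T'.erase e') y₁ z₁ :=
      UncGraph.tree_bridge hT'sp he'T' he'yz
    obtain ⟨havoid1, havoid2⟩ :=
      UncGraph.simple_walk_split_avoid hsplit hww1 hww2 hlnd he'yz hy1z1
    have hwpre := UncGraph.walk_erase_of_not_mem hww1 havoid1
    have hwsuf := UncGraph.walk_erase_of_not_mem hww2 havoid2
    have hsep : ¬ G.ConnectsVia (T'.erase e') af bf := fun hcontra =>
      hbr' (((UncGraph.conn_symm (UncGraph.walk_to_conn hwpre)).trans hcontra).trans
        (UncGraph.conn_symm (UncGraph.walk_to_conn hwsuf)))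
    have hle := UncGraph.mst_swap_le hmst he'T' hfT' haf hsep
    have hwff : wf f = b := by simp [hwf]
    have hbig : b < wf e' := by
      by_cases he'li : e' = li
      · subst he'li
        have : wf e' = α := by simp [hwf, hlif]
        rw [this]
        exact lt_of_lt_of_le hbm (Finset.min'_le _ _ (by simp [hvals]))
      · have hwfe : wf e' = w e' := by simp [hwf, he'f, he'li]
        rw [hwfe]
        have he'Xs : e' ∈ Xs := by
          rw [hXs, Finset.mem_filter]
          exact ⟨Finset.mem_univ _, he'li, he'f, y₁, z₁, he'yz, hncr⟩
        exact lt_of_lt_of_le hbm (Finset.min'_le _ _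
          (by rw [hvals]; simp only [Finset.mem_insert]
              exact Or.inr (Or.inr (Finset.mem_image_of_mem w he'Xs))))
    rw [hwff] at hle
    linarith
  constructor
  · intro Q hQ
    by_contra hcon
    push_neg at hcon
    have hliQ : li ∉ Q := hcon li (by simp)
    have hfQ : f ∉ Q := hcon f (by simp)
    exact absurd (key Q hQ hfQ ((G.L f + G.U li) / 2)
      ((G.mem_I_nontrivial hNli).mpr ⟨by linarith, by linarith⟩)
      (by linarith) (Or.inl hliQ)) not_false
  · intro hwli Q hQ
    by_contra hfQ
    have h1 : G.L f < w li := ((G.mem_I_nontrivial hNf).mp hwli).1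
    exact key Q hQ hfQ (w li) (hw li) h1 (Or.inr rfl)
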